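/- Let f_1, …, f_n : ℝ → ℝ be totally-defined continuous functions such that each pair intersects at most once (s = 1, e.g., distinct affine functions). Then the lower envelope min_i f_i(t) has at most n - 1 breakpoints; equivalently, the number of maximal intervals on which the minimizing index is constant is at most n (λ_1(n) = n). -/

import Mathlib

/-- For `n` continuous functions on `ℝ` such that each pair intersects at most
once, the lower envelope has at most `n` pieces: any sequence of times `t_0 < ⋯ < t_m`, at
each of which some function is the unique minimizer and where consecutive minimizers differ,
has length `m + 1 ≤ n`. -/
theorem stmt10 (n : ℕ) (f : Fin n → ℝ → ℝ)
    (hcont : ∀ i, Continuous (f i))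
    (hs : ∀ i j : Fin n, i ≠ j → Set.Subsingleton {t : ℝ | f i t = f j t})
    (m : ℕ) (t : Fin (m + 1) → ℝ) (ht : StrictMono t)
    (g : Fin (m + 1) → Fin n)
    (hmin : ∀ j, ∀ i, i ≠ g j → f (g j) (t j) < f i (t j))
    (hadj : ∀ j : Fin m, g j.castSucc ≠ g j.succ) :
    m + 1 ≤ n := by
  have key : ∀ j k : Fin (m + 1), j < k → g j ≠ g k := by
    intro j k hlt hjk
    have hjm : (j : ℕ) < m := by
      have hk : (k : ℕ) ≤ m := Nat.lt_succ_iff.mp k.isLt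
      have : (j : ℕ) < (k : ℕ) := hlt
      omega
    let j1 : Fin (m + 1) := ⟨(j : ℕ) + 1, by omega⟩
    have hba : g j1 ≠ g j := by
      have h := hadj ⟨(j : ℕ), hjm⟩
      have h1 : (⟨(j : ℕ), hjm⟩ : Fin m).castSucc = j := by ext; simp
      have h2 : (⟨(j : ℕ), hjm⟩ : Fin m).succ = j1 := by ext; simp; rfl
      rw [h1, h2] at h
      exact h.symm
    have hj1k : j1 < k := by
      rcases lt_or_eq_of_le (show j1 ≤ k from hlt) with h | h
      · exact h
      · exact absurd (h ▸ hjk : g j = g j1).symm hba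
    have hFc : Continuous fun s => f (g j) s - f (g j1) s :=
      (hcont (g j)).sub (hcont (g j1))
    have h1 : f (g j) (t j) - f (g j1) (t j) < 0 := by
      have := hmin j (g j1) hba; linarith
    have h2 : 0 < f (g j) (t j1) - f (g j1) (t j1) := by
      have := hmin j1 (g j) (Ne.symm hba); linarith
    have h3 : f (g j) (t k) - f (g j1) (t k) < 0 := by
      have hbk : g j1 ≠ g k := fun h => hba (h.trans hjk.symm)
      have := hmin k (g j1) hbk
      rw [← hjk] at this; linarith
    have htj : t j < t j1 := ht (show (j : ℕ) < (j : ℕ) + 1 by omega)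
    have htk : t j1 < t k := ht hj1k
    obtain ⟨s1, hs1, hFs1⟩ := intermediate_value_Icc htj.le hFc.continuousOn
      (Set.mem_Icc.mpr ⟨h1.le, h2.le⟩)
    obtain ⟨s2, hs2, hFs2⟩ := intermediate_value_Icc' htk.le hFc.continuousOn
      (Set.mem_Icc.mpr ⟨h3.le, h2.le⟩)
    have e1 : f (g j) s1 = f (g j1) s1 := by simpa [sub_eq_zero] using hFs1
    have e2 : f (g j) s2 = f (g j1) s2 := by simpa [sub_eq_zero] using hFs2
    have heq : s1 = s2 := hs (g j) (g j1) (Ne.symm hba) e1 e2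
    have hs1lt : s1 < t j1 := lt_of_le_of_ne hs1.2 (by
      intro h; rw [h] at hFs1; exact absurd hFs1.symm h2.ne)
    have hlt2 : s1 < s2 := lt_of_lt_of_le hs1lt hs2.1
    exact absurd heq hlt2.ne
  have hinj : Function.Injective g := by
    intro j k h
    by_contra hne
    rcases lt_or_gt_of_ne hne with hlt | hlt
    · exact key j k hlt h
    · exact key k j hlt h.symm
  calc m + 1 = Fintype.card (Fin (m + 1)) := by simp
    _ ≤ Fintype.card (Fin n) := Fintype.card_le_of_injective g hinj
    _ = n := by simp
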